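/- Suppose μ = φ·λ, where φ : ℝ → [0, 1] is Borel measurable and φ = 0 outside [a, b]. Let t ∈ ℝ and ε > 0 be such that sup_{x ∈ (t−ε, t+ε)} φ(x) < 1 and inf_{x ∈ (t−ε, t+ε)} φ(x) > 0. Then for every sequence (wₙ) in ℍ with wₙ → t, one has χ_L(wₙ) → t and η_L(wₙ) → 1 as n → ∞. -/

import Mathlib

open MeasureTheory Complex Filter Set intervalIntegral

noncomputable section

/-- The support of a measure on `ℝ`. -/
def msupport (μ : Measure ℝ) : Set ℝ := {x | ∀ U ∈ nhds x, μ U ≠ 0}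

/-- The Cauchy transform `C(w) = ∫ (w - x)⁻¹ dμ(x)`. -/
def cauchy (μ : Measure ℝ) (w : ℂ) : ℂ := ∫ x, (w - (x : ℂ))⁻¹ ∂μ

/-- `f′_{(χ,η)}(w) = C(w) + Log (w - χ) - Log (w - χ - η + 1)`. -/
def fprime (μ : Measure ℝ) (χ η : ℝ) (w : ℂ) : ℂ :=
  cauchy μ w + Complex.log (w - (χ : ℂ)) - Complex.log (w - (χ : ℂ) - (η : ℂ) + 1)

/-- `χ_L(w) = w + (w - w̄)(e^{C(w̄)} - 1)/(e^{C(w)} - e^{C(w̄)})`. -/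
def chiL (μ : Measure ℝ) (w : ℂ) : ℂ :=
  w + (w - (starRingEnd ℂ) w) * (Complex.exp (cauchy μ ((starRingEnd ℂ) w)) - 1) /
    (Complex.exp (cauchy μ w) - Complex.exp (cauchy μ ((starRingEnd ℂ) w)))

/-- `η_L(w) = 1 + (w - w̄)(e^{C(w)} - 1)(e^{C(w̄)} - 1)/(e^{C(w)} - e^{C(w̄)})`. -/
def etaL (μ : Measure ℝ) (w : ℂ) : ℂ :=
  1 + (w - (starRingEnd ℂ) w) * (Complex.exp (cauchy μ w) - 1) *
      (Complex.exp (cauchy μ ((starRingEnd ℂ) w)) - 1) /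
    (Complex.exp (cauchy μ w) - Complex.exp (cauchy μ ((starRingEnd ℂ) w)))

lemma kernel_re_int (u y c d : ℝ) (hy : 0 < y) :
    ∫ x in c..d, (u - x) / ((u - x)^2 + y^2) =
      (Real.log ((u - c)^2 + y^2) - Real.log ((u - d)^2 + y^2)) / 2 := by
  have key : ∀ x : ℝ, HasDerivAt (fun x => -Real.log ((u - x)^2 + y^2) / 2)
      ((u - x) / ((u - x)^2 + y^2)) x := by
    intro x
    have hpos : 0 < (u - x)^2 + y^2 := by positivity
    have h1 : HasDerivAt (fun x : ℝ => (u - x)^2 + y^2) (-(2*(u-x))) x := by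
      have : HasDerivAt (fun x : ℝ => u - x) (-1) x := by
        simpa using (hasDerivAt_id x).const_sub u
      simpa [mul_comm] using ((this.pow 2).add_const (y^2))
    have h2 := (Real.hasDerivAt_log hpos.ne').comp x h1
    have h3 := h2.neg.div_const 2
    refine h3.congr_deriv ?_
    field_simp
  rw [integral_eq_sub_of_hasDerivAt (fun x _ => key x)
    (Continuous.intervalIntegrable (by
      apply Continuous.div (by continuity) (by continuity)
      intro x; positivity) c d)]
  ring

lemma kernel_im_int (u y c d : ℝ) (hy : 0 < y) :
    ∫ x in c..d, y / ((u - x)^2 + y^2) =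
      Real.arctan ((d - u)/y) - Real.arctan ((c - u)/y) := by
  have key : ∀ x : ℝ, HasDerivAt (fun x => Real.arctan ((x - u)/y))
      (y / ((u - x)^2 + y^2)) x := by
    intro x
    have h1 : HasDerivAt (fun x : ℝ => (x - u)/y) (1/y) x := by
      simpa using ((hasDerivAt_id x).sub_const u).div_const y
    have h2 := (Real.hasDerivAt_arctan ((x - u)/y)).comp x h1
    refine h2.congr_deriv ?_
    have h3 : (u - x)^2 = (x - u)^2 := by ring
    field_simp [h3]
    ring
  rw [integral_eq_sub_of_hasDerivAt (fun x _ => key x)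
    (Continuous.intervalIntegrable (by
      apply Continuous.div (by continuity) (by continuity)
      intro x; positivity) c d)]

section Estimates

variable {φ : ℝ → ℝ} {a b t ε m s u y : ℝ}

lemma integrable_phi_kernel (hmeas : Measurable φ) (hφ0 : ∀ x, 0 ≤ φ x)
    (hφ1 : ∀ x, φ x ≤ 1) (hout : ∀ x, x ∉ Set.Icc a b → φ x = 0)
    {g : ℝ → ℝ} (hg : Continuous g) {K : ℝ} (hK : ∀ x, |g x| ≤ K) :
    Integrable (fun x => φ x * g x) volume := by
  have hKint : Integrable ((Set.Icc a b).indicator (fun _ => K)) volume := by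
    apply IntegrableOn.integrable_indicator _ measurableSet_Icc
    exact integrableOn_const (by simp) (by simp)
  apply Integrable.mono' hKint ((hmeas.mul hg.measurable).aestronglyMeasurable)
  refine Filter.Eventually.of_forall (fun x => ?_)
  by_cases hx : x ∈ Set.Icc a b
  · rw [Set.indicator_of_mem hx]
    calc ‖φ x * g x‖ = φ x * |g x| := by
          rw [norm_mul, Real.norm_eq_abs, Real.norm_eq_abs, _root_.abs_of_nonneg (hφ0 x)]
      _ ≤ 1 * K := mul_le_mul (hφ1 x) (hK x) (abs_nonneg _) zero_le_one
      _ = K := one_mul K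
  · rw [Set.indicator_of_notMem hx, Pi.mul_apply, hout x hx]
    simp

lemma Ioc_sub : |u - t| < ε/2 → Set.Ioc (u - ε/2) (u + ε/2) ⊆ Set.Ioo (t - ε) (t + ε) := by
  intro hu x hx
  rw [abs_lt] at hu
  constructor
  · linarith [hx.1]
  · linarith [hx.2]

lemma P_lb (hmeas : Measurable φ) (hφ0 : ∀ x, 0 ≤ φ x)
    (hφ1 : ∀ x, φ x ≤ 1) (hout : ∀ x, x ∉ Set.Icc a b → φ x = 0)
    (hε : 0 < ε) (hy : 0 < y) (hu : |u - t| < ε/2) (hm0 : 0 ≤ m)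
    (hmle : ∀ x ∈ Set.Ioo (t-ε) (t+ε), m ≤ φ x) :
    m * (2 * Real.arctan (ε/(2*y))) ≤ ∫ x, φ x * (y / ((u - x)^2 + y^2)) := by
  have hk : Continuous (fun x : ℝ => y / ((u - x)^2 + y^2)) := by
    apply Continuous.div (by continuity) (by continuity)
    intro x; positivity
  have hkK : ∀ x : ℝ, |y / ((u - x)^2 + y^2)| ≤ 1/y := by
    intro x
    rw [_root_.abs_of_nonneg (by positivity : (0:ℝ) ≤ y / ((u - x)^2 + y^2))]
    rw [div_le_div_iff₀ (by positivity) hy]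
    nlinarith [sq_nonneg (u - x)]
  have hint := integrable_phi_kernel hmeas hφ0 hφ1 hout hk hkK
  have hJ : MeasurableSet (Set.Ioc (u - ε/2) (u + ε/2)) := measurableSet_Ioc
  have step1 : ∫ x in Set.Ioc (u - ε/2) (u + ε/2), φ x * (y / ((u - x)^2 + y^2)) ≤
      ∫ x, φ x * (y / ((u - x)^2 + y^2)) := by
    apply setIntegral_le_integral hint
    refine Filter.Eventually.of_forall (fun x => ?_)
    have := hφ0 x; positivity
  refine le_trans ?_ step1
  have step2 : ∫ x in Set.Ioc (u - ε/2) (u + ε/2), m * (y / ((u - x)^2 + y^2)) ≤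
      ∫ x in Set.Ioc (u - ε/2) (u + ε/2), φ x * (y / ((u - x)^2 + y^2)) := by
    apply setIntegral_mono_on
    · exact ((hk.integrableOn_Ioc).const_mul m)
    · exact hint.integrableOn
    · exact hJ
    · intro x hx
      have h1 := hmle x (Ioc_sub hu hx)
      have : 0 ≤ y / ((u - x)^2 + y^2) := by positivity
      exact mul_le_mul_of_nonneg_right h1 this
  refine le_trans (le_of_eq ?_) step2
  rw [MeasureTheory.integral_const_mul, ← intervalIntegral.integral_of_le (by linarith),
    kernel_im_int u y _ _ hy]
  have h1 : (u + ε/2 - u)/y = ε/(2*y) := by ring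
  have h2 : (u - ε/2 - u)/y = -(ε/(2*y)) := by ring
  rw [h1, h2, Real.arctan_neg]
  ring

lemma P_ub (hmeas : Measurable φ) (hφ0 : ∀ x, 0 ≤ φ x)
    (hφ1 : ∀ x, φ x ≤ 1) (hout : ∀ x, x ∉ Set.Icc a b → φ x = 0)
    (hε : 0 < ε) (hy : 0 < y) (hu : |u - t| < ε/2) (hs0 : 0 ≤ s) (hba : a ≤ b)
    (hsle : ∀ x ∈ Set.Ioo (t-ε) (t+ε), φ x ≤ s) :
    ∫ x, φ x * (y / ((u - x)^2 + y^2)) ≤ s * Real.pi + y * (b - a) * (4/ε^2) := by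
  have hk : Continuous (fun x : ℝ => y / ((u - x)^2 + y^2)) := by
    apply Continuous.div (by continuity) (by continuity)
    intro x; positivity
  have hkK : ∀ x : ℝ, |y / ((u - x)^2 + y^2)| ≤ 1/y := by
    intro x
    rw [_root_.abs_of_nonneg (by positivity : (0:ℝ) ≤ y / ((u - x)^2 + y^2))]
    rw [div_le_div_iff₀ (by positivity) hy]
    nlinarith [sq_nonneg (u - x)]
  have hint := integrable_phi_kernel hmeas hφ0 hφ1 hout hk hkK
  set J := Set.Ioc (u - ε/2) (u + ε/2) with hJdef
  have hJ : MeasurableSet J := measurableSet_Ioc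
  rw [← integral_add_compl hJ hint]
  have near : ∫ x in J, φ x * (y / ((u - x)^2 + y^2)) ≤ s * Real.pi := by
    have step : ∫ x in J, φ x * (y / ((u - x)^2 + y^2)) ≤
        ∫ x in J, s * (y / ((u - x)^2 + y^2)) := by
      apply setIntegral_mono_on hint.integrableOn ((hk.integrableOn_Ioc).const_mul s) hJ
      intro x hx
      exact mul_le_mul_of_nonneg_right (hsle x (Ioc_sub hu hx)) (by positivity)
    refine le_trans step ?_
    rw [MeasureTheory.integral_const_mul, ← intervalIntegral.integral_of_le (by linarith : u - ε/2 ≤ u + ε/2),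
      kernel_im_int u y _ _ hy]
    apply mul_le_mul_of_nonneg_left _ hs0
    have h1 := Real.arctan_lt_pi_div_two ((u + ε/2 - u)/y)
    have h2 := Real.neg_pi_div_two_lt_arctan ((u - ε/2 - u)/y)
    linarith
  have far : ∫ x in Jᶜ, φ x * (y / ((u - x)^2 + y^2)) ≤ y * (b - a) * (4/ε^2) := by
    set B : ℝ → ℝ := (Set.Icc a b).indicator (fun _ => y * (4/ε^2)) with hBdef
    have hBint : Integrable B volume := by
      apply IntegrableOn.integrable_indicator _ measurableSet_Icc
      exact integrableOn_const (by simp) (by finiteness)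
    have step : ∫ x in Jᶜ, φ x * (y / ((u - x)^2 + y^2)) ≤ ∫ x in Jᶜ, B x := by
      apply setIntegral_mono_on hint.integrableOn hBint.integrableOn hJ.compl
      intro x hx
      by_cases hxab : x ∈ Set.Icc a b
      · rw [hBdef, Set.indicator_of_mem hxab]
        have hdist : ε/2 ≤ |u - x| := by
          rw [hJdef, Set.mem_compl_iff, Set.mem_Ioc, not_and_or] at hx
          rcases hx with hx | hx
          · push_neg at hx; rw [le_abs]; left; linarith
          · push_neg at hx; rw [le_abs]; right; linarith
        have hsq : ε^2/4 ≤ (u - x)^2 := by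
          have := abs_nonneg (u - x)
          nlinarith [_root_.sq_abs (u - x)]
        calc φ x * (y / ((u - x)^2 + y^2)) ≤ 1 * (y / ((u - x)^2 + y^2)) :=
              mul_le_mul_of_nonneg_right (hφ1 x) (by positivity)
          _ = y / ((u - x)^2 + y^2) := one_mul _
          _ ≤ y / (ε^2/4) := by
              apply div_le_div_of_nonneg_left hy.le (by positivity)
              nlinarith [sq_nonneg y]
          _ = y * (4/ε^2) := by field_simp
      · rw [hout x hxab, hBdef, Set.indicator_of_notMem hxab]
        simp
    refine le_trans step ?_
    have step2 : ∫ x in Jᶜ, B x ≤ ∫ x, B x := by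
      apply setIntegral_le_integral hBint
      refine Filter.Eventually.of_forall (fun x => ?_)
      rw [hBdef]
      apply Set.indicator_nonneg
      intro x _; positivity
    refine le_trans step2 (le_of_eq ?_)
    rw [hBdef, integral_indicator_const _ measurableSet_Icc]
    simp [Real.volume_Icc, ENNReal.toReal_ofReal (by linarith : (0:ℝ) ≤ b - a), hba]
    ring
  linarith

lemma Q_bound (hmeas : Measurable φ) (hφ0 : ∀ x, 0 ≤ φ x)
    (hφ1 : ∀ x, φ x ≤ 1) (hout : ∀ x, x ∉ Set.Icc a b → φ x = 0)
    (hε : 0 < ε) (hy : 0 < y) (hu : |u - t| < ε/2) (hms : m ≤ s) (hba : a ≤ b)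
    (hmle : ∀ x ∈ Set.Ioo (t-ε) (t+ε), m ≤ φ x)
    (hsle : ∀ x ∈ Set.Ioo (t-ε) (t+ε), φ x ≤ s) :
    |∫ x, φ x * ((u - x) / ((u - x)^2 + y^2))|
      ≤ (s - m) * ((Real.log ((ε/2)^2 + y^2) - Real.log (y^2)) / 2) + (b - a) * (2/ε) := by
  set g : ℝ → ℝ := fun x => (u - x) / ((u - x)^2 + y^2) with hgdef
  have hk : Continuous g := by
    apply Continuous.div (by continuity) (by continuity)
    intro x; positivity
  have hkK : ∀ x : ℝ, |g x| ≤ 1/(2*y) := by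
    intro x
    rw [hgdef, abs_div, _root_.abs_of_nonneg (by positivity : (0:ℝ) ≤ (u - x)^2 + y^2),
      div_le_div_iff₀ (by positivity) (by positivity)]
    nlinarith [sq_nonneg (|u - x| - y), _root_.sq_abs (u - x), abs_nonneg (u - x)]
  have hint := integrable_phi_kernel hmeas hφ0 hφ1 hout hk hkK
  set L : ℝ := (Real.log ((ε/2)^2 + y^2) - Real.log (y^2)) / 2 with hLdef
  have hL0 : 0 ≤ L := by
    rw [hLdef]
    have := Real.log_le_log (show (0:ℝ) < y^2 by positivity)
      (show y^2 ≤ (ε/2)^2 + y^2 by nlinarith)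
    linarith
  set J := Set.Ioc (u - ε/2) (u + ε/2) with hJdef
  have hJ : MeasurableSet J := measurableSet_Ioc
  rw [← integral_add_compl hJ hint]
  have hc : u - ε/2 ≤ u := by linarith
  have hd : u ≤ u + ε/2 := by linarith
  -- near part
  have hsplit : J = Set.Ioc (u - ε/2) u ∪ Set.Ioc u (u + ε/2) :=
    (Set.Ioc_union_Ioc_eq_Ioc hc hd).symm
  have hdisj : Disjoint (Set.Ioc (u - ε/2) u) (Set.Ioc u (u + ε/2)) :=
    Set.Ioc_disjoint_Ioc_of_le le_rfl
  have hnear_split : ∫ x in J, φ x * g x =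
      (∫ x in Set.Ioc (u - ε/2) u, φ x * g x) + ∫ x in Set.Ioc u (u + ε/2), φ x * g x := by
    rw [hsplit]
    exact setIntegral_union hdisj measurableSet_Ioc hint.integrableOn hint.integrableOn
  have hleftint : ∫ x in Set.Ioc (u - ε/2) u, g x = L := by
    rw [← intervalIntegral.integral_of_le hc, hgdef, kernel_re_int u y _ _ hy, hLdef]
    norm_num
  have hrightint : ∫ x in Set.Ioc u (u + ε/2), g x = -L := by
    rw [← intervalIntegral.integral_of_le hd, hgdef, kernel_re_int u y _ _ hy, hLdef]
    norm_num
    ring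
  have hsubL : Set.Ioc (u - ε/2) u ⊆ Set.Ioo (t-ε) (t+ε) := fun x hx =>
    Ioc_sub hu ⟨hx.1, le_trans hx.2 hd⟩
  have hsubR : Set.Ioc u (u + ε/2) ⊆ Set.Ioo (t-ε) (t+ε) := fun x hx =>
    Ioc_sub hu ⟨lt_of_le_of_lt hc hx.1, hx.2⟩
  have hgL : ∀ x ∈ Set.Ioc (u - ε/2) u, 0 ≤ g x := by
    intro x hx
    rw [hgdef]
    have : 0 ≤ u - x := by linarith [hx.2]
    positivity
  have hgR : ∀ x ∈ Set.Ioc u (u + ε/2), g x ≤ 0 := by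
    intro x hx
    rw [hgdef]
    apply div_nonpos_of_nonpos_of_nonneg _ (by positivity)
    linarith [hx.1]
  have hLub : ∫ x in Set.Ioc (u - ε/2) u, φ x * g x ≤ s * L := by
    rw [← hleftint, ← MeasureTheory.integral_const_mul]
    apply setIntegral_mono_on hint.integrableOn ((hk.integrableOn_Ioc).const_mul s)
      measurableSet_Ioc
    intro x hx
    exact mul_le_mul_of_nonneg_right (hsle x (hsubL hx)) (hgL x hx)
  have hLlb : m * L ≤ ∫ x in Set.Ioc (u - ε/2) u, φ x * g x := by
    rw [← hleftint, ← MeasureTheory.integral_const_mul]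
    apply setIntegral_mono_on ((hk.integrableOn_Ioc).const_mul m) hint.integrableOn
      measurableSet_Ioc
    intro x hx
    exact mul_le_mul_of_nonneg_right (hmle x (hsubL hx)) (hgL x hx)
  have hRub : ∫ x in Set.Ioc u (u + ε/2), φ x * g x ≤ m * (-L) := by
    rw [← hrightint, ← MeasureTheory.integral_const_mul]
    apply setIntegral_mono_on hint.integrableOn ((hk.integrableOn_Ioc).const_mul m)
      measurableSet_Ioc
    intro x hx
    have := hgR x hx
    nlinarith [hmle x (hsubR hx)]
  have hRlb : s * (-L) ≤ ∫ x in Set.Ioc u (u + ε/2), φ x * g x := by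
    rw [← hrightint, ← MeasureTheory.integral_const_mul]
    apply setIntegral_mono_on ((hk.integrableOn_Ioc).const_mul s) hint.integrableOn
      measurableSet_Ioc
    intro x hx
    have := hgR x hx
    nlinarith [hsle x (hsubR hx)]
  -- far part
  have far : |∫ x in Jᶜ, φ x * g x| ≤ (b - a) * (2/ε) := by
    set B : ℝ → ℝ := (Set.Icc a b).indicator (fun _ => 2/ε) with hBdef
    have hBint : Integrable B volume := by
      apply IntegrableOn.integrable_indicator _ measurableSet_Icc
      exact integrableOn_const (by simp) (by simp)
    have step0 : |∫ x in Jᶜ, φ x * g x| ≤ ∫ x in Jᶜ, |φ x * g x| := by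
      simpa [Real.norm_eq_abs, abs_mul] using
        norm_integral_le_integral_norm (μ := volume.restrict Jᶜ) (fun x => φ x * g x)
    refine le_trans step0 ?_
    have step : ∫ x in Jᶜ, |φ x * g x| ≤ ∫ x in Jᶜ, B x := by
      apply setIntegral_mono_on hint.abs.integrableOn hBint.integrableOn hJ.compl
      intro x hx
      by_cases hxab : x ∈ Set.Icc a b
      · rw [hBdef, Set.indicator_of_mem hxab]
        have hdist : ε/2 ≤ |u - x| := by
          rw [hJdef, Set.mem_compl_iff, Set.mem_Ioc, not_and_or] at hx
          rcases hx with hx | hx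
          · push_neg at hx; rw [le_abs]; left; linarith
          · push_neg at hx; rw [le_abs]; right; linarith
        have habs : |g x| ≤ 2/ε := by
          rw [hgdef, abs_div,
            _root_.abs_of_nonneg (by positivity : (0:ℝ) ≤ (u - x)^2 + y^2),
            div_le_div_iff₀ (by positivity) hε]
          have h0 : |u - x| * (ε/2) ≤ |u - x| * |u - x| :=
            mul_le_mul_of_nonneg_left hdist (abs_nonneg _)
          have h1 : |u - x| * |u - x| = (u - x)^2 := by
            rw [_root_.abs_mul_abs_self]; ring
          linarith [sq_nonneg y]
        calc |φ x * g x| = φ x * |g x| := by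
              rw [abs_mul, _root_.abs_of_nonneg (hφ0 x)]
          _ ≤ 1 * (2/ε) := mul_le_mul (hφ1 x) habs (abs_nonneg _) zero_le_one
          _ = 2/ε := one_mul _
      · rw [hout x hxab, hBdef, Set.indicator_of_notMem hxab]
        simp
    refine le_trans step ?_
    have step2 : ∫ x in Jᶜ, B x ≤ ∫ x, B x := by
      apply setIntegral_le_integral hBint
      refine Filter.Eventually.of_forall (fun x => ?_)
      rw [hBdef]
      apply Set.indicator_nonneg
      intro x _; positivity
    refine le_trans step2 (le_of_eq ?_)
    rw [hBdef, integral_indicator_const _ measurableSet_Icc]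
    simp [Real.volume_Icc, ENNReal.toReal_ofReal (by linarith : (0:ℝ) ≤ b - a), hba]
  rw [hnear_split]
  have h1 := abs_le.1 far
  have e1 : (s - m) * L = s * L - m * L := by ring
  have e2 : m * (-L) = -(m * L) := by ring
  have e3 : s * (-L) = -(s * L) := by ring
  rw [abs_le]
  constructor
  · linarith [h1.1, hLlb, hRlb]
  · linarith [h1.2, hLub, hRub]

end Estimates

section ComplexSide

lemma cauchy_conj (μ : Measure ℝ) (w : ℂ) :
    cauchy μ ((starRingEnd ℂ) w) = (starRingEnd ℂ) (cauchy μ w) := by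
  rw [cauchy, cauchy, ← integral_conj]
  congr 1; funext x
  rw [map_inv₀, map_sub, Complex.conj_ofReal]

lemma inv_re_eq (w : ℂ) (x : ℝ) :
    ((w - (x:ℂ))⁻¹).re = (w.re - x) / ((w.re - x)^2 + w.im^2) := by
  rw [Complex.inv_re]
  simp [Complex.normSq_apply]
  ring_nf

lemma inv_im_eq (w : ℂ) (x : ℝ) :
    ((w - (x:ℂ))⁻¹).im = -(w.im / ((w.re - x)^2 + w.im^2)) := by
  rw [Complex.inv_im]
  simp [Complex.normSq_apply]
  ring_nf

lemma sub_ofReal_ne_zero (w : ℂ) (hw : 0 < w.im) (x : ℝ) : w - (x:ℂ) ≠ 0 := by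
  intro h
  have := congrArg Complex.im h
  simp at this
  linarith

lemma cont_inv (w : ℂ) (hw : 0 < w.im) :
    Continuous (fun x : ℝ => (w - (x:ℂ))⁻¹) :=
  (continuous_const.sub Complex.continuous_ofReal).inv₀ (fun x => sub_ofReal_ne_zero w hw x)

lemma norm_inv_le (w : ℂ) (hw : 0 < w.im) (x : ℝ) : ‖(w - (x:ℂ))⁻¹‖ ≤ 1 / w.im := by
  have hpos : 0 < ‖w - (x:ℂ)‖ := by
    rw [norm_pos_iff]; exact sub_ofReal_ne_zero w hw x
  have hge : w.im ≤ ‖w - (x:ℂ)‖ := by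
    calc w.im = (w - (x:ℂ)).im := by simp
      _ ≤ |(w - (x:ℂ)).im| := le_abs_self _
      _ ≤ ‖w - (x:ℂ)‖ := Complex.abs_im_le_norm _
      _ = ‖w - (x:ℂ)‖ := rfl
  rw [norm_inv, inv_eq_one_div]
  exact div_le_div_of_nonneg_left zero_le_one hw hge |>.trans_eq rfl

lemma integrable_phi_cmul {φ : ℝ → ℝ} {a b : ℝ} (hmeas : Measurable φ) (hφ0 : ∀ x, 0 ≤ φ x)
    (hφ1 : ∀ x, φ x ≤ 1) (hout : ∀ x, x ∉ Set.Icc a b → φ x = 0)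
    (w : ℂ) (hw : 0 < w.im) :
    Integrable (fun x : ℝ => (φ x : ℂ) * (w - (x:ℂ))⁻¹) volume := by
  have hKint : Integrable ((Set.Icc a b).indicator (fun _ => 1 / w.im)) volume := by
    apply IntegrableOn.integrable_indicator _ measurableSet_Icc
    exact integrableOn_const (by simp) (by simp)
  apply Integrable.mono' hKint
  · exact ((Complex.measurable_ofReal.comp hmeas).mul
      (cont_inv w hw).measurable).aestronglyMeasurable
  refine Filter.Eventually.of_forall (fun x => ?_)
  by_cases hx : x ∈ Set.Icc a b
  · rw [Set.indicator_of_mem hx, norm_mul, Complex.norm_real, Real.norm_eq_abs,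
      _root_.abs_of_nonneg (hφ0 x)]
    calc φ x * ‖(w - (x:ℂ))⁻¹‖ ≤ 1 * (1 / w.im) :=
        mul_le_mul (hφ1 x) (norm_inv_le w hw x) (norm_nonneg _) zero_le_one
      _ = 1 / w.im := one_mul _
  · rw [Set.indicator_of_notMem hx, hout x hx]
    simp

lemma cauchy_repr {μ : Measure ℝ} {φ : ℝ → ℝ} {a b : ℝ}
    (hmeas : Measurable φ) (hφ0 : ∀ x, 0 ≤ φ x)
    (hφ1 : ∀ x, φ x ≤ 1) (hout : ∀ x, x ∉ Set.Icc a b → φ x = 0)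
    (hdens : μ = volume.withDensity (fun x => ENNReal.ofReal (φ x)))
    (w : ℂ) (hw : 0 < w.im) :
    (cauchy μ w).re = ∫ x, φ x * ((w.re - x) / ((w.re - x)^2 + w.im^2)) ∧
    (cauchy μ w).im = -∫ x, φ x * (w.im / ((w.re - x)^2 + w.im^2)) := by
  have hrw : cauchy μ w = ∫ x, (φ x : ℂ) * (w - (x:ℂ))⁻¹ := by
    rw [cauchy, hdens]
    have : (fun x => ENNReal.ofReal (φ x)) = (fun x => ((Real.toNNReal (φ x) : NNReal) : ENNReal)) := by
      funext x; rfl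
    rw [this, integral_withDensity_eq_integral_smul hmeas.real_toNNReal]
    congr 1; funext x
    rw [NNReal.smul_def, Real.coe_toNNReal _ (hφ0 x), Complex.real_smul]
  have hFint := integrable_phi_cmul hmeas hφ0 hφ1 hout w hw
  constructor
  · have h := ContinuousLinearMap.integral_comp_comm Complex.reCLM hFint
    simp only [Complex.reCLM_apply] at h
    rw [hrw, ← h]
    congr 1; funext x
    rw [Complex.mul_re, Complex.ofReal_re, Complex.ofReal_im, inv_re_eq]
    ring
  · have h := ContinuousLinearMap.integral_comp_comm Complex.imCLM hFint
    simp only [Complex.imCLM_apply] at h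
    rw [hrw, ← h, ← MeasureTheory.integral_neg]
    congr 1; funext x
    rw [Complex.mul_im, Complex.ofReal_re, Complex.ofReal_im, inv_im_eq]
    ring

end ComplexSide

lemma sin_lb {x α β : ℝ} (hα : 0 < α) (hαπ : α ≤ Real.pi/2) (hβπ : Real.pi/2 ≤ β)
    (hβ : β < Real.pi) (hx1 : α ≤ x) (hx2 : x ≤ β) :
    min (Real.sin α) (Real.sin β) ≤ Real.sin x := by
  have hpi := Real.pi_pos
  rcases le_total x (Real.pi/2) with h | h
  · refine le_trans (min_le_left _ _) ?_
    exact Real.strictMonoOn_sin.monotoneOn ⟨by linarith, hαπ⟩ ⟨by linarith, h⟩ hx1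
  · refine le_trans (min_le_right _ _) ?_
    rw [← Real.sin_pi_sub x, ← Real.sin_pi_sub β]
    exact Real.strictMonoOn_sin.monotoneOn ⟨by linarith, by linarith⟩
      ⟨by linarith, by linarith⟩ (by linarith)

lemma exp_L_bound {ε y p : ℝ} (hε : 0 < ε) (hy : 0 < y) (hyε : y ≤ ε/2) (hp : 0 ≤ p) :
    Real.exp (p * ((Real.log ((ε/2)^2 + y^2) - Real.log (y^2)) / 2)) ≤ (ε/y) ^ p := by
  have hA : (0:ℝ) < ((ε/2)^2 + y^2) / y^2 := by positivity
  have hlog : Real.log ((ε/2)^2 + y^2) - Real.log (y^2) = Real.log (((ε/2)^2 + y^2) / y^2) := by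
    rw [Real.log_div (by positivity) (by positivity)]
  rw [hlog]
  have h1 : Real.exp (p * (Real.log (((ε/2)^2 + y^2) / y^2) / 2))
      = (((ε/2)^2 + y^2) / y^2) ^ (p/2) := by
    rw [Real.rpow_def_of_pos hA]
    ring_nf
  rw [h1]
  have h2 : ((ε/2)^2 + y^2) / y^2 ≤ (ε/y)^2 := by
    have he : (ε/y)^2 = ε^2/y^2 := div_pow ε y 2
    rw [he, div_le_div_iff₀ (by positivity) (by positivity)]
    have h3 : y^2 ≤ (ε/2)^2 := by nlinarith
    nlinarith [h3, sq_nonneg y, sq_nonneg ε, mul_nonneg (sq_nonneg (ε/2)) (sq_nonneg y)]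
  calc (((ε/2)^2 + y^2) / y^2) ^ (p/2) ≤ ((ε/y)^2) ^ (p/2) :=
        Real.rpow_le_rpow hA.le h2 (by positivity)
    _ = (ε/y) ^ p := by
        rw [← Real.rpow_natCast (ε/y) 2, ← Real.rpow_mul (by positivity)]
        congr 1
        ring

lemma chiL_etaL_norm_bound (μ : Measure ℝ) (w : ℂ) (hw : 0 < w.im) {c : ℝ} (hc : 0 < c)
    (hsin : c ≤ |Real.sin ((cauchy μ w).im)|) :
    ‖chiL μ w - w‖ ≤ 2 * (w.im * Real.exp |(cauchy μ w).re|) / c ∧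
    ‖etaL μ w - 1‖ ≤ 4 * (w.im * Real.exp |(cauchy μ w).re|) / c := by
  set z := cauchy μ w with hz
  set E := Complex.exp z with hE
  set A := Real.exp z.re with hA
  set B := Real.exp |z.re| with hB
  set S := |Real.sin z.im| with hS
  have hApos : 0 < A := Real.exp_pos _
  have hBpos : 0 < B := Real.exp_pos _
  have hAB : A ≤ B := Real.exp_le_exp.2 (le_abs_self _)
  have hB1 : 1 ≤ B := by
    rw [hB, ← Real.exp_zero]
    exact Real.exp_le_exp.2 (abs_nonneg _)
  have hAB1 : 1 ≤ A * B := by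
    rw [hA, hB, ← Real.exp_add, ← Real.exp_zero]
    exact Real.exp_le_exp.2 (by linarith [neg_abs_le z.re])
  have hy := hw
  have hconjE : Complex.exp (cauchy μ ((starRingEnd ℂ) w)) = (starRingEnd ℂ) E := by
    rw [cauchy_conj μ w, ← Complex.exp_conj, hz]
  have hnum1 : ‖w - (starRingEnd ℂ) w‖ = 2 * w.im := by
    rw [Complex.sub_conj, norm_mul, Complex.norm_I, mul_one, Complex.norm_real,
      Real.norm_eq_abs, abs_of_pos (by linarith)]
  have hden : ‖E - (starRingEnd ℂ) E‖ = 2 * A * S := by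
    have hEim : E.im = A * Real.sin z.im := by rw [hE, Complex.exp_im, hA]
    rw [Complex.sub_conj, norm_mul, Complex.norm_I, mul_one, Complex.norm_real,
      Real.norm_eq_abs, hEim]
    rw [show (2 : ℝ) * (A * Real.sin z.im) = (2 * A) * Real.sin z.im by ring,
      abs_mul, abs_of_pos (by positivity : (0:ℝ) < 2 * A), hS]
  have hnormE : ‖E‖ = A := by rw [hE, Complex.norm_exp, hA]
  have hnormEc : ‖(starRingEnd ℂ) E - 1‖ ≤ A + 1 := by
    calc ‖(starRingEnd ℂ) E - 1‖ ≤ ‖(starRingEnd ℂ) E‖ + ‖(1:ℂ)‖ := norm_sub_le _ _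
      _ = A + 1 := by rw [RCLike.norm_conj, hnormE, norm_one]
  have hnormE1 : ‖E - 1‖ ≤ A + 1 := by
    calc ‖E - 1‖ ≤ ‖E‖ + ‖(1:ℂ)‖ := norm_sub_le _ _
      _ = A + 1 := by rw [hnormE, norm_one]
  have hcS : c ≤ S := hsin
  have hSpos : 0 < S := lt_of_lt_of_le hc hcS
  constructor
  · have hchi : chiL μ w - w = (w - (starRingEnd ℂ) w) * ((starRingEnd ℂ) E - 1) /
        (E - (starRingEnd ℂ) E) := by
      rw [chiL, hconjE, hE, hz]
      ring
    rw [hchi, norm_div, norm_mul, hnum1, hden]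
    calc 2 * w.im * ‖(starRingEnd ℂ) E - 1‖ / (2 * A * S)
        ≤ 2 * w.im * (A + 1) / (2 * A * S) := by
          apply div_le_div_of_nonneg_right ?_ (by positivity)
          exact mul_le_mul_of_nonneg_left hnormEc (by positivity)
      _ ≤ 2 * w.im * (A + 1) / (2 * A * c) := by
          apply div_le_div_of_nonneg_left (by positivity) (by positivity)
          nlinarith
      _ ≤ 2 * (w.im * B) / c := by
          rw [div_le_div_iff₀ (by positivity) hc]
          have hABA : A * 1 ≤ A * B := mul_le_mul_of_nonneg_left hB1 hApos.le
          have key : A + 1 ≤ 2 * (A * B) := by nlinarith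
          nlinarith [mul_le_mul_of_nonneg_left key
            (by positivity : (0:ℝ) ≤ 2 * w.im * c)]
  · have heta : etaL μ w - 1 = (w - (starRingEnd ℂ) w) * (E - 1) * ((starRingEnd ℂ) E - 1) /
        (E - (starRingEnd ℂ) E) := by
      rw [etaL, hconjE, hE, hz]
      ring
    rw [heta, norm_div, norm_mul, norm_mul, hnum1, hden]
    calc 2 * w.im * ‖E - 1‖ * ‖(starRingEnd ℂ) E - 1‖ / (2 * A * S)
        ≤ 2 * w.im * (A + 1) * (A + 1) / (2 * A * S) := by
          apply div_le_div_of_nonneg_right ?_ (by positivity)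
          apply mul_le_mul ?_ hnormEc (norm_nonneg _) (by positivity)
          exact mul_le_mul_of_nonneg_left hnormE1 (by positivity)
      _ ≤ 2 * w.im * (A + 1) * (A + 1) / (2 * A * c) := by
          apply div_le_div_of_nonneg_left (by positivity) (by positivity)
          nlinarith
      _ ≤ 4 * (w.im * B) / c := by
          rw [div_le_div_iff₀ (by positivity) hc]
          have hABA : A * 1 ≤ A * B := mul_le_mul_of_nonneg_left hB1 hApos.le
          have hAA : A * A ≤ A * B := mul_le_mul_of_nonneg_left hAB hApos.le
          have key : (A + 1) * (A + 1) ≤ 4 * (A * B) := by nlinarith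
          nlinarith [mul_le_mul_of_nonneg_left key
            (by positivity : (0:ℝ) ≤ 2 * w.im * c)]

set_option maxHeartbeats 2000000 in
/-- If `μ` has density `φ` with `sup φ < 1` and `inf φ > 0` on `(t-ε, t+ε)`, then for any
sequence `wₙ ∈ ℍ` with `wₙ → t`, `χ_L(wₙ) → t` and `η_L(wₙ) → 1`. -/
theorem chiL_etaL_tendsto_boundary (μ : Measure ℝ) (a b : ℝ) [IsProbabilityMeasure μ]
    (hle : μ ≤ volume) (hsupp : msupport μ ⊆ Set.Icc a b)
    (ha : a ∈ msupport μ) (hb : b ∈ msupport μ) (hab : 1 < b - a)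
    (φ : ℝ → ℝ) (hmeas : Measurable φ) (hφ0 : ∀ x, 0 ≤ φ x) (hφ1 : ∀ x, φ x ≤ 1)
    (hout : ∀ x, x ∉ Set.Icc a b → φ x = 0)
    (hdens : μ = volume.withDensity (fun x => ENNReal.ofReal (φ x)))
    (t ε : ℝ) (hε : 0 < ε)
    (hsup : sSup (φ '' Set.Ioo (t - ε) (t + ε)) < 1)
    (hinf : 0 < sInf (φ '' Set.Ioo (t - ε) (t + ε)))
    (w : ℕ → ℂ) (hw : ∀ n, 0 < (w n).im)
    (hlim : Filter.Tendsto w Filter.atTop (nhds (t : ℂ))) :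
    Filter.Tendsto (fun n => chiL μ (w n)) Filter.atTop (nhds (t : ℂ)) ∧
    Filter.Tendsto (fun n => etaL μ (w n)) Filter.atTop (nhds 1) := by
  have hpi := Real.pi_pos
  set m := sInf (φ '' Set.Ioo (t - ε) (t + ε)) with hm
  set s := sSup (φ '' Set.Ioo (t - ε) (t + ε)) with hs
  have htmem : t ∈ Set.Ioo (t - ε) (t + ε) := ⟨by linarith, by linarith⟩
  have hbddA : BddAbove (φ '' Set.Ioo (t - ε) (t + ε)) := by
    refine ⟨1, ?_⟩; rintro z ⟨x, -, rfl⟩; exact hφ1 x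
  have hbddB : BddBelow (φ '' Set.Ioo (t - ε) (t + ε)) := by
    refine ⟨0, ?_⟩; rintro z ⟨x, -, rfl⟩; exact hφ0 x
  have hmle : ∀ x ∈ Set.Ioo (t-ε) (t+ε), m ≤ φ x := fun x hx => csInf_le hbddB ⟨x, hx, rfl⟩
  have hsle : ∀ x ∈ Set.Ioo (t-ε) (t+ε), φ x ≤ s := fun x hx => le_csSup hbddA ⟨x, hx, rfl⟩
  have hm0 : 0 < m := hinf
  have hs1 : s < 1 := hsup
  have hms : m ≤ s := le_trans (hmle t htmem) (hsle t htmem)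
  have hs0 : 0 < s := lt_of_lt_of_le hm0 hms
  have hm1 : m < 1 := lt_of_le_of_lt hms hs1
  have hba : a ≤ b := by linarith
  -- constants
  set c₀ := min (Real.sin (m * Real.pi / 2)) (Real.sin (Real.pi * (1 + s) / 2)) with hc₀
  have hc₀pos : 0 < c₀ := by
    apply lt_min
    · apply Real.sin_pos_of_pos_of_lt_pi (by positivity)
      nlinarith
    · apply Real.sin_pos_of_pos_of_lt_pi (by positivity)
      nlinarith
  set p := s - m with hpdef
  have hp0 : 0 ≤ p := by linarith
  have hq : 0 < 1 - p := by linarith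
  set M := (b - a) * (2 / ε) with hMdef
  set δ₂ := (Real.pi * (1 - s) / 2) / ((b - a) * (4 / ε ^ 2) + 1) with hδ₂
  have hδ₂pos : 0 < δ₂ := by
    apply div_pos (by nlinarith)
    have : 0 < (b - a) * (4 / ε ^ 2) := by
      apply mul_pos (by linarith)
      positivity
    linarith
  -- real/imag parts tend
  have hure : Tendsto (fun n => (w n).re) atTop (nhds t) := by
    have := (Complex.continuous_re.tendsto (t:ℂ)).comp hlim
    simpa [Function.comp_def] using this
  have hyim : Tendsto (fun n => (w n).im) atTop (nhds 0) := by
    have := (Complex.continuous_im.tendsto (t:ℂ)).comp hlim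
    simpa [Function.comp_def] using this
  -- eventual smallness
  have hE1 : ∀ᶠ n in atTop, |(w n).re - t| < ε/2 := by
    have h := Metric.tendsto_atTop.1 hure (ε/2) (by positivity)
    obtain ⟨N, hN⟩ := h
    refine eventually_atTop.2 ⟨N, fun n hn => ?_⟩
    have := hN n hn
    rwa [Real.dist_eq] at this
  have hE2 : ∀ᶠ n in atTop, (w n).im ≤ min (ε/2) δ₂ := by
    have h := Metric.tendsto_atTop.1 hyim (min (ε/2) δ₂) (lt_min (by positivity) hδ₂pos)
    obtain ⟨N, hN⟩ := h
    refine eventually_atTop.2 ⟨N, fun n hn => ?_⟩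
    have := hN n hn
    rw [Real.dist_eq, sub_zero, abs_of_pos (hw n)] at this
    exact this.le
  -- the eventual sine lower bound
  have hSin : ∀ᶠ n in atTop, c₀ ≤ |Real.sin ((cauchy μ (w n)).im)| := by
    filter_upwards [hE1, hE2] with n h1 h2
    have hyn := hw n
    have hy2 : (w n).im ≤ ε/2 := le_trans h2 (min_le_left _ _)
    have hyδ : (w n).im ≤ δ₂ := le_trans h2 (min_le_right _ _)
    have him := (cauchy_repr hmeas hφ0 hφ1 hout hdens (w n) hyn).2
    set P := ∫ x, φ x * ((w n).im / (((w n).re - x)^2 + (w n).im^2)) with hP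
    have hPlb := P_lb hmeas hφ0 hφ1 hout hε hyn h1 hm0.le hmle
    have hPub := P_ub hmeas hφ0 hφ1 hout hε hyn h1 hs0.le hba hsle
    have harct : Real.pi/4 ≤ Real.arctan (ε/(2*(w n).im)) := by
      rw [← Real.arctan_one]
      apply Real.arctan_strictMono.monotone
      rw [le_div_iff₀ (by positivity)]
      linarith
    have hPlow : m * Real.pi / 2 ≤ P := by
      refine le_trans ?_ hPlb
      have := mul_le_mul_of_nonneg_left harct hm0.le
      nlinarith
    have hPhigh : P ≤ Real.pi * (1 + s) / 2 := by
      refine le_trans hPub ?_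
      have hfar : (w n).im * (b - a) * (4/ε^2) ≤ Real.pi * (1 - s) / 2 := by
        have h3 : (w n).im * ((b - a) * (4 / ε ^ 2) + 1) ≤ δ₂ * ((b - a) * (4 / ε ^ 2) + 1) := by
          apply mul_le_mul_of_nonneg_right hyδ
          have : 0 < (b - a) * (4 / ε ^ 2) := mul_pos (by linarith) (by positivity)
          linarith
        rw [hδ₂, div_mul_cancel₀] at h3
        · nlinarith [hyn.le, mul_pos (show (0:ℝ) < b - a by linarith)
            (show (0:ℝ) < 4/ε^2 by positivity)]
        · have : 0 < (b - a) * (4 / ε ^ 2) := mul_pos (by linarith) (by positivity)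
          linarith
      linarith
    have hα1 : 0 < m * Real.pi / 2 := div_pos (mul_pos hm0 hpi) two_pos
    have hα2 : m * Real.pi / 2 ≤ Real.pi / 2 := by
      have := mul_le_mul_of_nonneg_right hm1.le hpi.le
      linarith
    have hβ1 : Real.pi / 2 ≤ Real.pi * (1 + s) / 2 := by
      have := mul_le_mul_of_nonneg_left (show (1:ℝ) ≤ 1 + s by linarith) hpi.le
      linarith
    have hβ2 : Real.pi * (1 + s) / 2 < Real.pi := by
      have := mul_lt_mul_of_pos_left (show (1:ℝ) + s < 2 by linarith) hpi
      linarith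
    have hsinP : c₀ ≤ Real.sin P :=
      le_trans hc₀.le (sin_lb hα1 hα2 hβ1 hβ2 hPlow hPhigh)
    rw [him, Real.sin_neg, abs_neg]
    exact le_trans hsinP (le_abs_self _)
  -- the quantity y * exp |Re C| tends to 0
  set Z : ℕ → ℝ := fun n => (w n).im * Real.exp |(cauchy μ (w n)).re| with hZdef
  have hZbound : ∀ᶠ n in atTop, Z n ≤ (Real.exp M * ε ^ p) * (w n).im ^ (1 - p) := by
    filter_upwards [hE1, hE2] with n h1 h2
    have hyn := hw n
    have hy2 : (w n).im ≤ ε/2 := le_trans h2 (min_le_left _ _)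
    have hre := (cauchy_repr hmeas hφ0 hφ1 hout hdens (w n) hyn).1
    set L := (Real.log ((ε/2)^2 + (w n).im^2) - Real.log ((w n).im^2)) / 2 with hL
    have hQ : |(cauchy μ (w n)).re| ≤ p * L + M := by
      rw [hre]
      exact Q_bound hmeas hφ0 hφ1 hout hε hyn h1 hms hba hmle hsle
    calc Z n ≤ (w n).im * Real.exp (p * L + M) :=
          mul_le_mul_of_nonneg_left (Real.exp_le_exp.2 hQ) hyn.le
      _ = Real.exp M * ((w n).im * Real.exp (p * L)) := by rw [Real.exp_add]; ring
      _ ≤ Real.exp M * ((w n).im * (ε/(w n).im) ^ p) := by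
          apply mul_le_mul_of_nonneg_left _ (Real.exp_pos M).le
          exact mul_le_mul_of_nonneg_left (exp_L_bound hε hyn hy2 hp0) hyn.le
      _ = (Real.exp M * ε ^ p) * (w n).im ^ (1 - p) := by
          have hyp : (0:ℝ) < (w n).im ^ p := Real.rpow_pos_of_pos hyn p
          rw [Real.div_rpow hε.le hyn.le, Real.rpow_sub hyn 1 p, Real.rpow_one]
          field_simp
  have hZnn : ∀ᶠ n in atTop, 0 ≤ Z n :=
    Filter.Eventually.of_forall (fun n => mul_nonneg (hw n).le (Real.exp_pos _).le)
  have hgtend : Tendsto (fun n => (Real.exp M * ε ^ p) * (w n).im ^ (1 - p)) atTop (nhds 0) := by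
    have hcont : ContinuousAt (fun x : ℝ => x ^ (1 - p)) 0 :=
      Real.continuousAt_rpow_const 0 (1 - p) (Or.inr hq.le)
    have h1 : Tendsto (fun n => (w n).im ^ (1 - p)) atTop (nhds ((0:ℝ) ^ (1 - p))) :=
      (hcont.tendsto).comp hyim
    rw [Real.zero_rpow hq.ne'] at h1
    have := h1.const_mul (Real.exp M * ε ^ p)
    simpa using this
  have hZtend : Tendsto Z atTop (nhds 0) := squeeze_zero' hZnn hZbound hgtend
  -- final bounds
  have hbounds : ∀ᶠ n in atTop,
      ‖chiL μ (w n) - w n‖ ≤ 2 * Z n / c₀ ∧ ‖etaL μ (w n) - 1‖ ≤ 4 * Z n / c₀ := by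
    filter_upwards [hSin] with n hsn
    exact chiL_etaL_norm_bound μ (w n) (hw n) hc₀pos hsn
  have h2Z : Tendsto (fun n => 2 * Z n / c₀) atTop (nhds 0) := by
    have := (hZtend.const_mul (2/c₀))
    simp only [mul_zero] at this
    refine this.congr (fun n => by ring)
  have h4Z : Tendsto (fun n => 4 * Z n / c₀) atTop (nhds 0) := by
    have := (hZtend.const_mul (4/c₀))
    simp only [mul_zero] at this
    refine this.congr (fun n => by ring)
  have hchi0 : Tendsto (fun n => chiL μ (w n) - w n) atTop (nhds 0) :=
    squeeze_zero_norm' (hbounds.mono (fun n h => h.1)) h2Z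
  have heta0 : Tendsto (fun n => etaL μ (w n) - 1) atTop (nhds 0) :=
    squeeze_zero_norm' (hbounds.mono (fun n h => h.2)) h4Z
  constructor
  · have := hchi0.add hlim
    simp only [zero_add] at this
    refine this.congr (fun n => by ring)
  · have : Tendsto (fun n => (etaL μ (w n) - 1) + 1) atTop (nhds (0 + 1)) :=
      heta0.add tendsto_const_nhds
    simp only [zero_add] at this
    refine this.congr (fun n => by ring)
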